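/- Let L₀ be a simple non-abelian anti-commutative algebra over a field whose automorphism group acts irreducibly, and let L = L₀^{⊕ℓ} for ℓ ≥ 1. Then the minimal ideals of L are exactly the ℓ direct summands, and Aut(L) is isomorphic to the wreath product Aut(L₀) ≀ Sym(ℓ). -/
import Mathlib


variable {F L : Type*} [Field F] [AddCommGroup L] [Module F L]

/-- A linear automorphism of `L` preserving the product `mul`. -/
def IsMulAut (mul : L →ₗ[F] L →ₗ[F] L) (e : L ≃ₗ[F] L) : Prop :=
  ∀ x y : L, e (mul x y) = mul (e x) (e y)

/-- `Aut(L)` acts irreducibly on `L`. -/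
def IsIrredAlg (mul : L →ₗ[F] L →ₗ[F] L) : Prop :=
  ∀ W : Submodule F L,
    (∀ e : L ≃ₗ[F] L, IsMulAut mul e → W.map (e : L →ₗ[F] L) = W) → W = ⊥ ∨ W = ⊤

/-- An ideal of the anti-commutative algebra `(L, mul)`. -/
def IsAlgIdeal (mul : L →ₗ[F] L →ₗ[F] L) (W : Submodule F L) : Prop :=
  ∀ x ∈ W, ∀ y : L, mul x y ∈ W

/-- A minimal (non-zero) ideal. -/
def IsMinIdeal (mul : L →ₗ[F] L →ₗ[F] L) (I : Submodule F L) : Prop :=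
  IsAlgIdeal mul I ∧ I ≠ ⊥ ∧ ∀ J : Submodule F L, IsAlgIdeal mul J → J ≤ I → J = ⊥ ∨ J = I

/-- The componentwise product on `L^{⊕ℓ}`. -/
def pimul (mul : L →ₗ[F] L →ₗ[F] L) (ℓ : ℕ) :
    (Fin ℓ → L) →ₗ[F] (Fin ℓ → L) →ₗ[F] (Fin ℓ → L) :=
  LinearMap.mk₂ F (fun f g i => mul (f i) (g i))
    (fun f f' g => by funext i; simp)
    (fun c f g => by funext i; simp)
    (fun f g g' => by funext i; simp)
    (fun c f g => by funext i; simp)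

/-- The `i`-th direct summand of `L^{⊕ℓ}`. -/
def summand (F L : Type*) [Field F] [AddCommGroup L] [Module F L] (ℓ : ℕ) (i : Fin ℓ) :
    Submodule F (Fin ℓ → L) where
  carrier := {f | ∀ j, j ≠ i → f j = 0}
  add_mem' := fun ha hb j hj => by simp [ha j hj, hb j hj]
  zero_mem' := fun j _ => rfl
  smul_mem' := fun c a ha j hj => by simp [ha j hj]

/-- The automorphism group of the algebra `(L, mul)`, as a subgroup of `GL(L)`. -/
def algAutGroup (mul : L →ₗ[F] L →ₗ[F] L) : Subgroup (L ≃ₗ[F] L) where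
  carrier := {e | IsMulAut mul e}
  one_mem' := fun _ _ => rfl
  mul_mem' := by
    intro a b ha hb x y
    show a (b (mul x y)) = mul (a (b x)) (a (b y))
    rw [hb, ha]
  inv_mem' := by
    intro e he x y
    show e.symm (mul x y) = mul (e.symm x) (e.symm y)
    apply e.injective
    rw [he]
    simp

/-- Permutation of the coordinates of `A^ℓ`, as a monoid hom to `MulAut`. -/
def permHom (A : Type*) [Group A] (ℓ : ℕ) :
    Equiv.Perm (Fin ℓ) →* MulAut (Fin ℓ → A) :=
  MonoidHom.mk' (fun σ => MulEquiv.mk (Equiv.arrowCongr σ (Equiv.refl A)) (fun f g => rfl))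
    (by intro σ τ; ext f i; rfl)

-- auxiliary lemmas
section Aux
variable {mul : L →ₗ[F] L →ₗ[F] L} {ℓ : ℕ}

lemma pimul_apply (f g : Fin ℓ → L) (i : Fin ℓ) : pimul mul ℓ f g i = mul (f i) (g i) := rfl

lemma mem_summand {f : Fin ℓ → L} {i : Fin ℓ} :
    f ∈ summand F L ℓ i ↔ ∀ j, j ≠ i → f j = 0 := Iff.rfl

lemma single_mem_summand (i : Fin ℓ) (x : L) : Pi.single i x ∈ summand F L ℓ i :=
  fun j hj => by simp [Pi.single_apply, hj]

lemma eq_single_of_mem_summand {f : Fin ℓ → L} {i : Fin ℓ} (hf : f ∈ summand F L ℓ i) :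
    Pi.single i (f i) = f := by
  funext j
  by_cases h : j = i
  · subst h; simp
  · simp [Pi.single_eq_of_ne h, hf j h]

lemma span_mul_eq_top (hsimple : ∀ J : Submodule F L, IsAlgIdeal mul J → J = ⊥ ∨ J = ⊤)
    (hna : ∃ x y : L, mul x y ≠ 0) :
    Submodule.span F {z : L | ∃ x y, mul x y = z} = ⊤ := by
  set T := Submodule.span F {z : L | ∃ x y, mul x y = z} with hT
  have hle : T ≤ ⨅ y : L, T.comap (mul.flip y) := by
    rw [hT, Submodule.span_le]
    rintro z ⟨a, b, rfl⟩
    simp only [Set.mem_setOf_eq, SetLike.mem_coe, Submodule.mem_iInf, Submodule.mem_comap]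
    intro y
    exact Submodule.subset_span ⟨_, _, rfl⟩
  have hideal : IsAlgIdeal mul T := by
    intro x hx y
    exact (Submodule.mem_iInf _).1 (hle hx) y
  rcases hsimple T hideal with h | h
  · exfalso
    obtain ⟨x, y, hxy⟩ := hna
    have hm : mul x y ∈ T := Submodule.subset_span ⟨x, y, rfl⟩
    rw [h, Submodule.mem_bot] at hm
    exact hxy hm
  · exact h

lemma proj_ideal {W : Submodule F (Fin ℓ → L)} (hW : IsAlgIdeal (pimul mul ℓ) W) (i : Fin ℓ) :
    IsAlgIdeal mul (W.map (LinearMap.proj i)) := by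
  rintro x ⟨w, hw, rfl⟩ y
  exact ⟨pimul mul ℓ w (Pi.single i y), hW w hw _, by simp [pimul_apply, LinearMap.proj]⟩

lemma summand_min (hsimple : ∀ J : Submodule F L, IsAlgIdeal mul J → J = ⊥ ∨ J = ⊤)
    (hna : ∃ x y : L, mul x y ≠ 0) (i : Fin ℓ) :
    IsMinIdeal (pimul mul ℓ) (summand F L ℓ i) := by
  obtain ⟨x, y, hxy⟩ := hna
  have hx : x ≠ 0 := fun h => hxy (by simp [h])
  refine ⟨fun f hf g j hj => ?_, ?_, ?_⟩
  · show mul (f j) (g j) = 0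
    rw [hf j hj]; simp
  · intro h
    have : Pi.single i x ∈ (⊥ : Submodule F (Fin ℓ → L)) := h ▸ single_mem_summand i x
    rw [Submodule.mem_bot] at this
    exact hx (by simpa using congrFun this i)
  · intro J hJ hle
    rcases hsimple (J.map (LinearMap.proj i)) (proj_ideal hJ i) with h | h
    · left
      rw [Submodule.eq_bot_iff]
      intro w hw
      funext j
      by_cases hji : j = i
      · subst hji
        have : w j ∈ J.map (LinearMap.proj j) := ⟨w, hw, rfl⟩
        rw [h] at this; simpa using this
      · exact hle hw j hji
    · right
      refine le_antisymm hle (fun f hf => ?_)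
      have : f i ∈ J.map (LinearMap.proj i) := h ▸ Submodule.mem_top
      obtain ⟨w, hw, hwi⟩ := this
      have hws : Pi.single i (w i) = w := eq_single_of_mem_summand (hle hw)
      have : w = f := by rw [← hws, show w i = f i from hwi, eq_single_of_mem_summand hf]
      exact this ▸ hw

lemma min_is_summand (hsimple : ∀ J : Submodule F L, IsAlgIdeal mul J → J = ⊥ ∨ J = ⊤)
    (hna : ∃ x y : L, mul x y ≠ 0) {W : Submodule F (Fin ℓ → L)}
    (hW : IsMinIdeal (pimul mul ℓ) W) : ∃ i : Fin ℓ, W = summand F L ℓ i := by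
  obtain ⟨hWid, hWne, hWmin⟩ := hW
  obtain ⟨w, hw, hwne⟩ := Submodule.exists_mem_ne_zero_of_ne_bot hWne
  obtain ⟨i, hi⟩ := Function.ne_iff.1 hwne
  refine ⟨i, ?_⟩
  have hP : W.map (LinearMap.proj i) = ⊤ := by
    rcases hsimple _ (proj_ideal hWid i) with h | h
    · exfalso
      have hm : w i ∈ W.map (LinearMap.proj i) := ⟨w, hw, rfl⟩
      rw [h, Submodule.mem_bot] at hm
      exact hi (by simpa using hm)
    · exact h
  have key : ∀ x : L, Pi.single i x ∈ W := by
    have hTS : Submodule.span F {z : L | ∃ x y, mul x y = z} ≤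
        W.comap (LinearMap.single F (fun _ : Fin ℓ => L) i) := by
      rw [Submodule.span_le]
      rintro z ⟨a, b, rfl⟩
      have : a ∈ W.map (LinearMap.proj i) := hP ▸ Submodule.mem_top
      obtain ⟨w', hw', hw'i⟩ := this
      have heq : Pi.single i (mul a b) = pimul mul ℓ w' (Pi.single i b) := by
        funext j
        by_cases hji : j = i
        · subst hji
          rw [Pi.single_eq_same, pimul_apply, Pi.single_eq_same, show w' j = a from hw'i]
        · simp [pimul_apply, Pi.single_eq_of_ne hji]
      simp only [SetLike.mem_coe, Submodule.mem_comap]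
      show Pi.single i (mul a b) ∈ W
      rw [heq]
      exact hWid w' hw' _
    intro x
    have hx : x ∈ (⊤ : Submodule F L) := trivial
    rw [← span_mul_eq_top hsimple hna] at hx
    exact hTS hx
  have hle : summand F L ℓ i ≤ W := fun f hf => (eq_single_of_mem_summand hf) ▸ key (f i)
  rcases hWmin _ (summand_min hsimple hna i).1 hle with h | h
  · exact absurd h (summand_min hsimple hna i).2.1
  · exact h.symm

end Aux

section Aut

lemma isMulAut_symm {M : Type*} [AddCommGroup M] [Module F M] {pm : M →ₗ[F] M →ₗ[F] M}
    {e : M ≃ₗ[F] M} (he : IsMulAut pm e) : IsMulAut pm e.symm := by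
  intro x y
  apply e.injective
  rw [he]; simp

lemma map_map_symm {M : Type*} [AddCommGroup M] [Module F M]
    (e : M ≃ₗ[F] M) (X : Submodule F M) :
    (X.map (e : M →ₗ[F] M)).map (e.symm : M →ₗ[F] M) = X := by
  ext x
  constructor
  · rintro ⟨_, ⟨w, hw, rfl⟩, rfl⟩; simpa using hw
  · intro hx; exact ⟨e x, ⟨x, hx, rfl⟩, by simp⟩

lemma minideal_map {M : Type*} [AddCommGroup M] [Module F M] {pm : M →ₗ[F] M →ₗ[F] M}
    {e : M ≃ₗ[F] M} (he : IsMulAut pm e) {I : Submodule F M} (hI : IsMinIdeal pm I) :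
    IsMinIdeal pm (I.map (e : M →ₗ[F] M)) := by
  obtain ⟨hid, hne, hmin⟩ := hI
  refine ⟨?_, ?_, ?_⟩
  · rintro _ ⟨w, hw, rfl⟩ y
    refine ⟨pm w (e.symm y), hid w hw _, ?_⟩
    show e (pm w (e.symm y)) = pm (e w) y
    rw [he]; simp
  · intro h
    apply hne
    rw [Submodule.eq_bot_iff] at h ⊢
    intro x hx
    have := h (e x) ⟨x, hx, rfl⟩
    exact e.map_eq_zero_iff.1 this
  · intro J hJ hle
    have hJ' : IsAlgIdeal pm (J.map (e.symm : M →ₗ[F] M)) := by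
      rintro _ ⟨w, hw, rfl⟩ y
      refine ⟨pm w (e y), hJ w hw _, ?_⟩
      show e.symm (pm w (e y)) = pm (e.symm w) y
      rw [isMulAut_symm he]; simp
    have hle' : J.map (e.symm : M →ₗ[F] M) ≤ I := by
      rintro _ ⟨w, hw, rfl⟩
      obtain ⟨u, hu, huw⟩ := hle hw
      have : e.symm w = u := by rw [← huw]; simp
      exact this ▸ hu
    rcases hmin _ hJ' hle' with h | h
    · left
      rw [Submodule.eq_bot_iff] at h ⊢
      intro x hx
      have := h (e.symm x) ⟨x, hx, rfl⟩
      simpa using congrArg e this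
    · right
      refine le_antisymm hle ?_
      rintro _ ⟨y, hy, rfl⟩
      rw [← h] at hy
      obtain ⟨w, hw, hwy⟩ := hy
      have : e y = w := by rw [← hwy]; simp
      exact this ▸ hw

variable {mul : L →ₗ[F] L →ₗ[F] L} {ℓ : ℕ}

lemma summand_inj (hx0 : ∃ x : L, x ≠ 0) {i j : Fin ℓ}
    (h : summand F L ℓ i = summand F L ℓ j) : i = j := by
  by_contra hij
  obtain ⟨x, hx⟩ := hx0
  have hm : Pi.single i x ∈ summand F L ℓ j := h ▸ single_mem_summand i x
  exact hx (by simpa using hm i hij)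

lemma aut_decomp (hsimple : ∀ J : Submodule F L, IsAlgIdeal mul J → J = ⊥ ∨ J = ⊤)
    (hna : ∃ x y : L, mul x y ≠ 0) {e : (Fin ℓ → L) ≃ₗ[F] (Fin ℓ → L)}
    (he : IsMulAut (pimul mul ℓ) e) :
    ∃ (σ : Equiv.Perm (Fin ℓ)) (a : Fin ℓ → (L ≃ₗ[F] L)),
      (∀ i, IsMulAut mul (a i)) ∧ ∀ f i, e f i = a i (f (σ.symm i)) := by
  have hx0 : ∃ x : L, x ≠ 0 := by
    obtain ⟨x, y, hxy⟩ := hna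
    exact ⟨x, fun h => hxy (by simp [h])⟩
  have hmin : ∀ j, IsMinIdeal (pimul mul ℓ)
      ((summand F L ℓ j).map (e : (Fin ℓ → L) →ₗ[F] (Fin ℓ → L))) :=
    fun j => minideal_map he (summand_min hsimple hna j)
  choose τ hτ using fun j => min_is_summand hsimple hna (hmin j)
  have hinj : Function.Injective τ := by
    intro j₁ j₂ h
    have h1 : (summand F L ℓ j₁).map (e : (Fin ℓ → L) →ₗ[F] (Fin ℓ → L)) =
        (summand F L ℓ j₂).map (e : (Fin ℓ → L) →ₗ[F] (Fin ℓ → L)) := by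
      rw [hτ, hτ, h]
    have h2 : summand F L ℓ j₁ = summand F L ℓ j₂ := by
      rw [← map_map_symm e (summand F L ℓ j₁), h1, map_map_symm]
    exact summand_inj hx0 h2
  let σ : Equiv.Perm (Fin ℓ) := Equiv.ofBijective τ (Finite.injective_iff_bijective.1 hinj)
  have hσ : ∀ j, (summand F L ℓ j).map (e : (Fin ℓ → L) →ₗ[F] (Fin ℓ → L)) =
      summand F L ℓ (σ j) := hτ
  have hσs : ∀ i, (summand F L ℓ i).map (e.symm : (Fin ℓ → L) →ₗ[F] (Fin ℓ → L)) =
      summand F L ℓ (σ.symm i) := by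
    intro i
    have h1 : (summand F L ℓ (σ.symm i)).map (e : (Fin ℓ → L) →ₗ[F] (Fin ℓ → L)) =
        summand F L ℓ i := by rw [hσ, Equiv.apply_symm_apply]
    rw [← h1, map_map_symm]
  have hes : ∀ (j : Fin ℓ) (x : L), e (Pi.single j x) ∈ summand F L ℓ (σ j) :=
    fun j x => hσ j ▸ ⟨_, single_mem_summand j x, rfl⟩
  have hes' : ∀ (i : Fin ℓ) (x : L), e.symm (Pi.single i x) ∈ summand F L ℓ (σ.symm i) :=
    fun i x => hσs i ▸ ⟨_, single_mem_summand i x, rfl⟩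
  have key2 : ∀ (i : Fin ℓ) (y : L),
      (e (Pi.single (σ.symm i) ((e.symm (Pi.single i y)) (σ.symm i)))) i = y := by
    intro i y
    have h1 := eq_single_of_mem_summand (hes' i y)
    rw [h1, e.apply_symm_apply, Pi.single_eq_same]
  have key1 : ∀ (i : Fin ℓ) (x : L),
      (e.symm (Pi.single i ((e (Pi.single (σ.symm i) x)) i))) (σ.symm i) = x := by
    intro i x
    have hmem := hes (σ.symm i) x
    rw [Equiv.apply_symm_apply] at hmem
    have h1 := eq_single_of_mem_summand hmem
    rw [h1, e.symm_apply_apply, Pi.single_eq_same]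
  refine ⟨σ, fun i => LinearEquiv.ofLinear
    ((LinearMap.proj i) ∘ₗ (e : (Fin ℓ → L) →ₗ[F] (Fin ℓ → L)) ∘ₗ
      (LinearMap.single F (fun _ : Fin ℓ => L) (σ.symm i)))
    ((LinearMap.proj (σ.symm i)) ∘ₗ (e.symm : (Fin ℓ → L) →ₗ[F] (Fin ℓ → L)) ∘ₗ
      (LinearMap.single F (fun _ : Fin ℓ => L) i))
    (by ext y
        simp only [LinearMap.coe_comp, Function.comp_apply, LinearMap.id_apply]
        exact key2 i y)
    (by ext x
        simp only [LinearMap.coe_comp, Function.comp_apply, LinearMap.id_apply]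
        exact key1 i x), ?_, ?_⟩
  · intro i x y
    show (e (Pi.single (σ.symm i) (mul x y))) i =
      mul ((e (Pi.single (σ.symm i) x)) i) ((e (Pi.single (σ.symm i) y)) i)
    have hsm : Pi.single (σ.symm i) (mul x y) =
        pimul mul ℓ (Pi.single (σ.symm i) x) (Pi.single (σ.symm i) y) := by
      funext k
      by_cases hk : k = σ.symm i
      · subst hk; rw [Pi.single_eq_same, pimul_apply, Pi.single_eq_same, Pi.single_eq_same]
      · rw [Pi.single_eq_of_ne hk, pimul_apply, Pi.single_eq_of_ne hk]; simp
    rw [hsm, he, pimul_apply]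
  · intro f i
    conv_lhs => rw [← Finset.univ_sum_single f, map_sum, Finset.sum_apply]
    rw [Finset.sum_eq_single (σ.symm i)]
    · rfl
    · intro j _ hj
      refine hes j (f j) i (fun h => hj ?_)
      rw [h, Equiv.symm_apply_apply]
    · intro h; exact absurd (Finset.mem_univ _) h

end Aut

section Hom
variable {mul : L →ₗ[F] L →ₗ[F] L} {ℓ : ℕ}

def wrE (a : Fin ℓ → algAutGroup mul) (σ : Equiv.Perm (Fin ℓ)) :
    (Fin ℓ → L) ≃ₗ[F] (Fin ℓ → L) :=
  (LinearEquiv.piCongrLeft' F (fun _ => L) σ).trans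
    (LinearEquiv.piCongrRight fun i => (a i : L ≃ₗ[F] L))

lemma wrE_apply (a : Fin ℓ → algAutGroup mul) (σ : Equiv.Perm (Fin ℓ)) (f : Fin ℓ → L)
    (i : Fin ℓ) : wrE a σ f i = (a i : L ≃ₗ[F] L) (f (σ.symm i)) := rfl

lemma wrE_mem (a : Fin ℓ → algAutGroup mul) (σ : Equiv.Perm (Fin ℓ)) :
    wrE a σ ∈ algAutGroup (pimul mul ℓ) := by
  intro f g
  funext i
  show (a i : L ≃ₗ[F] L) (pimul mul ℓ f g (σ.symm i)) = pimul mul ℓ (wrE a σ f) (wrE a σ g) i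
  rw [pimul_apply, pimul_apply]
  exact (a i).2 _ _

def wrHom (mul : L →ₗ[F] L →ₗ[F] L) (ℓ : ℕ) :
    ((Fin ℓ → algAutGroup mul) ⋊[permHom (algAutGroup mul) ℓ] Equiv.Perm (Fin ℓ)) →*
      algAutGroup (pimul mul ℓ) :=
  MonoidHom.mk' (fun p => ⟨wrE p.left p.right, wrE_mem p.left p.right⟩)
    (by
      intro p q
      apply Subtype.ext
      apply LinearEquiv.toLinearMap_injective
      rfl)

end Hom


/-- Let `L₀` be a simple non-abelian anti-commutative algebra whose
automorphism group acts irreducibly, and `L = L₀^{⊕ℓ}` with componentwise product.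
Then the minimal ideals of `L` are exactly the `ℓ` direct summands, and
`Aut(L) ≅ Aut(L₀) ≀ Sym(ℓ)`. -/
theorem stmt10 (mul : L →ₗ[F] L →ₗ[F] L)
    (halt : ∀ x : L, mul x x = 0)
    (hsimple : ∀ J : Submodule F L, IsAlgIdeal mul J → J = ⊥ ∨ J = ⊤)
    (hna : ∃ x y : L, mul x y ≠ 0)
    (hirr : IsIrredAlg mul)
    (ℓ : ℕ) (hl : 1 ≤ ℓ) :
    (∀ W : Submodule F (Fin ℓ → L),
      IsMinIdeal (pimul mul ℓ) W ↔ ∃ i : Fin ℓ, W = summand F L ℓ i) ∧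
    Nonempty (algAutGroup (pimul mul ℓ) ≃*
      ((Fin ℓ → algAutGroup mul) ⋊[permHom (algAutGroup mul) ℓ] Equiv.Perm (Fin ℓ))) := by
  have hx0 : ∃ x : L, x ≠ 0 := by
    obtain ⟨x, y, hxy⟩ := hna
    exact ⟨x, fun h => hxy (by simp [h])⟩
  constructor
  · intro W
    constructor
    · exact min_is_summand hsimple hna
    · rintro ⟨i, rfl⟩
      exact summand_min hsimple hna i
  · have hinj : Function.Injective (wrHom mul ℓ) := by
      rw [injective_iff_map_eq_one]
      rintro ⟨a, σ⟩ h
      have hval : wrE a σ = (1 : (Fin ℓ → L) ≃ₗ[F] (Fin ℓ → L)) := congrArg Subtype.val h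
      have hEf : ∀ (f : Fin ℓ → L) (i : Fin ℓ), (a i : L ≃ₗ[F] L) (f (σ.symm i)) = f i := by
        intro f i
        have h1 : wrE a σ f i = f i := by rw [hval]; rfl
        rw [← h1, wrE_apply]
      obtain ⟨x, hx⟩ := hx0
      have hσ1 : ∀ j, σ j = j := by
        intro j
        by_contra hj
        have h2 := hEf (Pi.single j x) (σ j)
        rw [Equiv.symm_apply_apply, Pi.single_eq_same, Pi.single_eq_of_ne hj] at h2
        exact hx ((a (σ j) : L ≃ₗ[F] L).map_eq_zero_iff.1 h2)
      have hσ : σ = 1 := Equiv.ext hσ1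
      have ha : a = 1 := by
        funext i
        apply Subtype.ext
        apply LinearEquiv.ext
        intro y
        have := hEf (fun _ => y) i
        simpa using this
      rw [hσ, ha]
      rfl
    have hsurj : Function.Surjective (wrHom mul ℓ) := by
      rintro ⟨e, he⟩
      obtain ⟨σ, a, ha, hfor⟩ := aut_decomp hsimple hna he
      refine ⟨⟨fun i => ⟨a i, ha i⟩, σ⟩, ?_⟩
      apply Subtype.ext
      exact LinearEquiv.ext fun f => funext fun i => (hfor f i).symm
    exact ⟨(MulEquiv.ofBijective _ ⟨hinj, hsurj⟩).symm⟩
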